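/- For any commutative ring R, any n : ℕ, and any derivation D of A = MvPolynomial (Fin n) R: if the Jacobian matrix J(D) is nilpotent, then D is a right nilpotent element of the left-symmetric algebra of derivations, i.e., there exists m with D^{[m]} = 0, where D^{[1]} = D and D^{[r+1]} = D^{[r]} ⋆ D. -/

import Mathlib

open MvPolynomial in
lemma dsum_apply {R : Type*} [CommRing R] {n : ℕ}
    (c : Fin n → MvPolynomial (Fin n) R) (s : Finset (Fin n))
    (p : MvPolynomial (Fin n) R) :
    (∑ j ∈ s, c j • (pderiv j : Derivation R (MvPolynomial (Fin n) R) (MvPolynomial (Fin n) R))) p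
      = ∑ j ∈ s, c j * pderiv j p := by
  induction s using Finset.induction_on with
  | empty => simp
  | insert _ _ hj ih => simp [Finset.sum_insert hj, Derivation.add_apply, Derivation.smul_apply, ih]

open MvPolynomial in
lemma deriv_apply {R : Type*} [CommRing R] {n : ℕ}
    (E : Derivation R (MvPolynomial (Fin n) R) (MvPolynomial (Fin n) R))
    (p : MvPolynomial (Fin n) R) :
    E p = ∑ j, pderiv j p * E (X j) := by
  have : E = ∑ j, (E (X j)) • (pderiv j : Derivation R (MvPolynomial (Fin n) R) (MvPolynomial (Fin n) R)) := by
    apply MvPolynomial.derivation_ext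
    intro i
    rw [dsum_apply]
    simp [pderiv_X, Pi.single_apply, Finset.sum_ite_eq', mul_comm]
  conv_lhs => rw [this, dsum_apply]
  exact Finset.sum_congr rfl fun j _ => mul_comm _ _

/-- The left-symmetric product on derivations of `MvPolynomial (Fin n) R`:
`D ⋆ E` is the unique derivation with `(D ⋆ E) (X i) = D (E (X i))`. -/
noncomputable def lsmul {R : Type*} [CommRing R] {n : ℕ}
    (D E : Derivation R (MvPolynomial (Fin n) R) (MvPolynomial (Fin n) R)) :
    Derivation R (MvPolynomial (Fin n) R) (MvPolynomial (Fin n) R) :=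
  MvPolynomial.mkDerivation R (fun i => D (E (MvPolynomial.X i)))

/-- The Jacobian matrix of a derivation: `jac D j i = ∂ᵢ (D (X j))`. -/
noncomputable def jac {R : Type*} [CommRing R] {n : ℕ}
    (D : Derivation R (MvPolynomial (Fin n) R) (MvPolynomial (Fin n) R)) :
    Matrix (Fin n) (Fin n) (MvPolynomial (Fin n) R) :=
  Matrix.of fun j i => MvPolynomial.pderiv i (D (MvPolynomial.X j))

/-- Right powers: `rightPow D 1 = D`, `rightPow D (r+1) = rightPow D r ⋆ D`. -/
noncomputable def rightPow {R : Type*} [CommRing R] {n : ℕ}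
    (D : Derivation R (MvPolynomial (Fin n) R) (MvPolynomial (Fin n) R)) :
    ℕ → Derivation R (MvPolynomial (Fin n) R) (MvPolynomial (Fin n) R)
  | 0 => 0
  | 1 => D
  | (r + 2) => lsmul (rightPow D (r + 1)) D


open MvPolynomial in
lemma rightPow_X {R : Type*} [CommRing R] {n : ℕ}
    (D : Derivation R (MvPolynomial (Fin n) R) (MvPolynomial (Fin n) R))
    (r : ℕ) (i : Fin n) :
    rightPow D (r + 1) (X i) = ((jac D) ^ r).mulVec (fun j => D (X j)) i := by
  induction r generalizing i with
  | zero => simp [rightPow, Matrix.mulVec, dotProduct, Matrix.one_apply,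
      Finset.sum_ite_eq, mul_comm]
  | succ r ih =>
    show (lsmul (rightPow D (r + 1)) D) (X i) = _
    rw [lsmul, mkDerivation_X, deriv_apply]
    simp_rw [ih]
    rw [pow_succ', ← Matrix.mulVec_mulVec]
    simp [Matrix.mulVec, dotProduct, jac]

/-- If the Jacobian matrix of `D` is nilpotent, then `D` is a right nilpotent element of
the left-symmetric algebra of derivations. -/
theorem right_nilpotent_of_jac_nilpotent (R : Type*) [CommRing R] (n : ℕ)
    (D : Derivation R (MvPolynomial (Fin n) R) (MvPolynomial (Fin n) R))
    (h : IsNilpotent (jac D)) :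
    ∃ m : ℕ, 2 ≤ m ∧ rightPow D m = 0 := by
  obtain ⟨k, hk⟩ := h
  refine ⟨k + 2, by omega, ?_⟩
  apply MvPolynomial.derivation_ext
  intro i
  rw [show k + 2 = (k + 1) + 1 from rfl, rightPow_X, pow_succ, hk]
  simp
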